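/- For every λ⊕-term M, 𝒯(eBT(M)) = {s ∈ 𝒯(M) | s is a normal resource term}: the Taylor support of the elementary Böhm tree of M consists exactly of the →∂-normal elements of the Taylor support of M. -/

import Mathlib

set_option maxHeartbeats 1000000

/-! ### Rigid resource terms -/

/-- Rigid resource terms (de Bruijn indices for variables):
`a ::= x | λ.a | ⟨a⟩b⃗ | a⊕• | •⊕a` where argument lists are ordered. -/
inductive Rt : Type
  | var : ℕ → Rt
  | lam : Rt → Rt
  | app : Rt → List Rt → Rt
  | inl : Rt → Rt
  | inr : Rt → Rt
deriving Inhabited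

/-- Rigid resource expressions: terms or (rigid) monomials. -/
abbrev REx : Type := Rt ⊕ List Rt

/-! ### Isomorphism of rigid expressions -/

mutual
  /-- Two rigid terms are isomorphic (`≅`) when they differ only by
  permutations of argument lists. -/
  inductive IsoT : Rt → Rt → Prop
    | var (x : ℕ) : IsoT (.var x) (.var x)
    | lam {a a'} : IsoT a a' → IsoT (.lam a) (.lam a')
    | inl {a a'} : IsoT a a' → IsoT (.inl a) (.inl a')
    | inr {a a'} : IsoT a a' → IsoT (.inr a) (.inr a')
    | app {c c' : Rt} {ds ds' : List Rt} :
        IsoT c c' → IsoM ds ds' → IsoT (.app c ds) (.app c' ds')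
  /-- Isomorphism of rigid monomials: a permutation `σ` together with
  isomorphisms `aᵢ ≅ a'_{σ(i)}`. -/
  inductive IsoM : List Rt → List Rt → Prop
    | mk (as as' : List Rt) (h : as'.length = as.length) (σ : Equiv.Perm (Fin as.length))
        (H : ∀ i : Fin as.length, IsoT (as.get i) (as'.get ((σ i).cast h.symm))) :
        IsoM as as'
end

/-! ### Resource expressions as quotients of rigid expressions -/

/-- Resource terms: rigid terms up to permutations of arguments, i.e. terms
whose argument lists are multisets. -/
def ResTerm : Type := Quot IsoT

instance : Inhabited ResTerm := ⟨Quot.mk _ (.var 0)⟩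

/-- The resource term represented by a rigid term (`r ◁ |r|`). -/
def rmk : Rt → ResTerm := Quot.mk IsoT

/-- A choice of rigid representation of a resource term. -/
noncomputable def rout : ResTerm → Rt := Quot.out

/-- The resource monomial (multiset) represented by a rigid monomial (list). -/
def toMul (bs : List Rt) : Multiset ResTerm := ↑(bs.map rmk)

/-- Resource expressions: terms or monomials (finite multisets of terms). -/
abbrev ResExpr : Type := ResTerm ⊕ Multiset ResTerm

/-- The resource expression represented by a rigid expression. -/
def toQ : REx → ResExpr := Sum.map rmk toMul

/-- A choice of rigid representation of a resource expression. -/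
noncomputable def outE : ResExpr → REx :=
  Sum.map rout (fun m => m.toList.map rout)

/-- Variable as a resource term. -/
def qVar (x : ℕ) : ResTerm := rmk (.var x)

/-- Abstraction on resource terms. -/
noncomputable def qLam (s : ResTerm) : ResTerm := rmk (.lam (rout s))

/-- Left injection `(-) ⊕ •` on resource terms. -/
noncomputable def qInl (s : ResTerm) : ResTerm := rmk (.inl (rout s))

/-- Right injection `• ⊕ (-)` on resource terms. -/
noncomputable def qInr (s : ResTerm) : ResTerm := rmk (.inr (rout s))

/-- Application `⟨s⟩t̄` of a resource term to a resource monomial. -/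
noncomputable def qApp (s : ResTerm) (t : Multiset ResTerm) : ResTerm :=
  rmk (.app (rout s) (t.toList.map rout))

/-! ### The nondeterministic λ⊕-calculus (de Bruijn indices) -/

/-- λ⊕-terms: `M ::= x | λx.M | M N | M ⊕ N`. -/
inductive Lam : Type
  | var : ℕ → Lam
  | lam : Lam → Lam
  | app : Lam → Lam → Lam
  | oplus : Lam → Lam → Lam
deriving Inhabited

namespace Lam

/-- Shift free de Bruijn indices `≥ c` up by one. -/
def shift (c : ℕ) : Lam → Lam
  | .var n => .var (if n < c then n else n + 1)
  | .lam M => .lam (M.shift (c + 1))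
  | .app M N => .app (M.shift c) (N.shift c)
  | .oplus M N => .oplus (M.shift c) (N.shift c)

/-- Capture-avoiding substitution `M[N/x]` (de Bruijn). -/
def subst : Lam → ℕ → Lam → Lam
  | .var n, x, N => if n = x then N else if x < n then .var (n - 1) else .var n
  | .lam M, x, N => .lam (M.subst (x + 1) (N.shift 0))
  | .app M P, x, N => .app (M.subst x N) (P.subst x N)
  | .oplus M P, x, N => .oplus (M.subst x N) (P.subst x N)

/-- Does the head of the application spine consist of a variable? -/
def headVar : Lam → Bool
  | .var _ => true
  | .app M _ => M.headVar
  | _ => false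

/-- The hereditary head reduction strategy `L` on λ⊕-terms. -/
def headL : Lam → Lam
  | .var x => .var x
  | .oplus M N => .oplus M.headL N.headL
  | .lam (.oplus P Q) => .oplus (.lam P) (.lam Q)
  | .lam M => .lam M.headL
  | .app (.lam P) N => P.subst 0 N
  | .app (.oplus P Q) N => .oplus (.app P N) (.app Q N)
  | .app M N => if M.headVar then .app M.headL N.headL else .app M.headL N

end Lam

/-! ### The support of Taylor expansion, as a set -/

/-- The support `𝒯(M)` of the Taylor expansion of a λ⊕-term. -/
noncomputable def Tsup : Lam → Set ResTerm
  | .var x => {qVar x}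
  | .lam M => qLam '' Tsup M
  | .app P Q =>
      {u | ∃ s ∈ Tsup P, ∃ t : Multiset ResTerm, (∀ v ∈ t, v ∈ Tsup Q) ∧ u = qApp s t}
  | .oplus P Q => qInl '' Tsup P ∪ qInr '' Tsup Q

/-! ### Term approximants and Böhm trees -/

/-- Term approximants: λ⊕-terms extended with `⊥`. -/
inductive LamB : Type
  | bot : LamB
  | var : ℕ → LamB
  | lam : LamB → LamB
  | app : LamB → LamB → LamB
  | oplus : LamB → LamB → LamB
deriving Inhabited

/-- The approximation order on term approximants: the least partial order
compatible with the syntactic constructs such that `⊥ ≤ M`. -/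
inductive LamB.le : LamB → LamB → Prop
  | bot (M : LamB) : LamB.le .bot M
  | refl (M : LamB) : LamB.le M M
  | trans {M N P} : LamB.le M N → LamB.le N P → LamB.le M P
  | lam {M M'} : LamB.le M M' → LamB.le (.lam M) (.lam M')
  | app {M M' N N'} : LamB.le M M' → LamB.le N N' → LamB.le (.app M N) (.app M' N')
  | oplus {M M' N N'} : LamB.le M M' → LamB.le N N' → LamB.le (.oplus M N) (.oplus M' N')

/-- Is the term of the form `λx⃗.x Q₁…Qₖ`? -/
def Lam.isHNF : Lam → Bool
  | .lam M => M.isHNF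
  | .var _ => true
  | .app M _ => M.headVar
  | .oplus _ _ => false

/-- The elementary Böhm tree of a λ⊕-term: `eBT(M⊕N) = eBT(M)⊕eBT(N)`,
`eBT(λx⃗.x Q₁…Qₖ) = λx⃗.x eBT(Q₁)…eBT(Qₖ)`, and `eBT(M) = ⊥` otherwise. -/
def eBT : Lam → LamB
  | .oplus M N => .oplus (eBT M) (eBT N)
  | .lam M => if M.isHNF then .lam (eBT M) else .bot
  | .var x => .var x
  | .app M N => if M.headVar then .app (eBT M) (eBT N) else .bot

/-- The Böhm tree of a λ⊕-term: the downwards closure of the increasing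
sequence of the elementary Böhm trees of its hereditary head reducts. -/
def BTset (M : Lam) : Set LamB := {B | ∃ n : ℕ, LamB.le B (eBT (Lam.headL^[n] M))}

/-! ### Taylor support of approximants and Böhm trees -/

/-- Taylor support of a term approximant (with `𝒯(⊥) = ∅`). -/
noncomputable def TsupB : LamB → Set ResTerm
  | .bot => ∅
  | .var x => {qVar x}
  | .lam M => qLam '' TsupB M
  | .app P Q =>
      {u | ∃ s ∈ TsupB P, ∃ t : Multiset ResTerm, (∀ v ∈ t, v ∈ TsupB Q) ∧ u = qApp s t}
  | .oplus P Q => qInl '' TsupB P ∪ qInr '' TsupB Q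

/-- Taylor support of a Böhm tree. -/
noncomputable def TsupBT (M : Lam) : Set ResTerm :=
  {s | ∃ B ∈ BTset M, s ∈ TsupB B}

/-! ### Normal resource terms -/

/-- Is the rigid term of the form `a⊕•` or `•⊕a`? -/
def Rt.isSum : Rt → Bool
  | .inl _ => true
  | .inr _ => true
  | _ => false

/-- Can the rigid term be applied without creating a redex
(i.e. is it a variable or an application)? -/
def Rt.isHeadOk : Rt → Bool
  | .var _ => true
  | .app _ _ => true
  | _ => false

/-- A rigid term is normal when it contains no redex, i.e. no subterm of shape
`⟨λx.s⟩t̄`, `⟨s⊕•⟩t̄`, `⟨•⊕s⟩t̄`, `λx.(s⊕•)` or `λx.(•⊕s)`. -/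
def normalRt : Rt → Bool
  | .var _ => true
  | .lam a => !a.isSum && normalRt a
  | .inl a => normalRt a
  | .inr a => normalRt a
  | .app c ds => c.isHeadOk && normalRt c && (ds.attach.all fun e => normalRt e.1)
termination_by r => sizeOf r
decreasing_by
  all_goals simp_wf
  all_goals try omega
  all_goals (have := List.sizeOf_lt_of_mem e.2; omega)

/-- A resource term is normal when (any of) its rigid representations is. -/
def NormalQ (s : ResTerm) : Prop := ∃ a : Rt, rmk a = s ∧ normalRt a = true


/-! ### Auxiliary lemmas -/

theorem isoT_isSum {a b : Rt} (h : IsoT a b) : a.isSum = b.isSum := by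
  cases h <;> rfl

theorem isoT_isHeadOk {a b : Rt} (h : IsoT a b) : a.isHeadOk = b.isHeadOk := by
  cases h <;> rfl

theorem normalRt_app (c : Rt) (ds : List Rt) :
    normalRt (.app c ds) = (c.isHeadOk && normalRt c && ds.all normalRt) := by
  rw [normalRt]
  congr 1
  rw [Bool.eq_iff_iff, List.all_eq_true, List.all_eq_true]
  constructor
  · intro h x hx; exact h ⟨x, hx⟩ (List.mem_attach _ _)
  · intro h e _; exact h e.1 e.2

theorem isoT_normal : ∀ (a b : Rt), IsoT a b → normalRt a = normalRt b
  | _, _, .var x => rfl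
  | _, _, @IsoT.lam a a' h => by
      rw [normalRt, normalRt, isoT_isSum h, isoT_normal a a' h]
  | _, _, @IsoT.inl a a' h => by
      rw [normalRt, normalRt, isoT_normal a a' h]
  | _, _, @IsoT.inr a a' h => by
      rw [normalRt, normalRt, isoT_normal a a' h]
  | _, _, @IsoT.app c c' ds ds' hc (.mk _ _ hl σ H) => by
      rw [normalRt_app, normalRt_app, isoT_isHeadOk hc, isoT_normal c c' hc]
      congr 1
      rw [Bool.eq_iff_iff, List.all_eq_true, List.all_eq_true]
      constructor
      · intro hall y hy
        obtain ⟨j, rfl⟩ := List.mem_iff_get.mp hy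
        have hij : (σ (σ.symm (j.cast hl))).cast hl.symm = j := by simp
        rw [← hij, ← isoT_normal _ _ (H (σ.symm (j.cast hl)))]
        exact hall _ (List.get_mem _ _)
      · intro hall x hx
        obtain ⟨i, rfl⟩ := List.mem_iff_get.mp hx
        rw [isoT_normal _ _ (H i)]
        exact hall _ (List.get_mem _ _)
termination_by a => sizeOf a
decreasing_by
  all_goals simp_wf
  all_goals try omega
  all_goals
    (first
      | omega
      | (have := List.sizeOf_lt_of_mem (List.getElem_mem (l := ds)
           (n := ↑((Equiv.symm σ) (Fin.cast hl j))) (by omega)); omega)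
      | (have := List.sizeOf_lt_of_mem (List.getElem_mem (l := ds) (n := ↑i) (by omega)); omega))

/-- `normalRt` descends to the quotient. -/
def normalQ : ResTerm → Bool := Quot.lift normalRt (fun a b h => isoT_normal a b h)

/-- `Rt.isSum` descends to the quotient. -/
def sumQ : ResTerm → Bool := Quot.lift Rt.isSum (fun _ _ h => isoT_isSum h)

/-- `Rt.isHeadOk` descends to the quotient. -/
def headOkQ : ResTerm → Bool := Quot.lift Rt.isHeadOk (fun _ _ h => isoT_isHeadOk h)

theorem NormalQ_iff (s : ResTerm) : NormalQ s ↔ normalQ s = true := by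
  constructor
  · rintro ⟨a, rfl, ha⟩; exact ha
  · intro h
    obtain ⟨a, rfl⟩ := Quot.exists_rep s
    exact ⟨a, rfl, h⟩

theorem rmk_rout (s : ResTerm) : rmk (rout s) = s := Quot.out_eq s

theorem normalQ_rout (s : ResTerm) : normalRt (rout s) = normalQ s := by
  conv_rhs => rw [← rmk_rout s]
  rfl
theorem sumQ_rout (s : ResTerm) : (rout s).isSum = sumQ s := by
  conv_rhs => rw [← rmk_rout s]
  rfl
theorem headOkQ_rout (s : ResTerm) : (rout s).isHeadOk = headOkQ s := by
  conv_rhs => rw [← rmk_rout s]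
  rfl

@[simp] theorem sumQ_qVar (x : ℕ) : sumQ (qVar x) = false := rfl
@[simp] theorem sumQ_qLam (s : ResTerm) : sumQ (qLam s) = false := rfl
@[simp] theorem sumQ_qApp (s : ResTerm) (t : Multiset ResTerm) : sumQ (qApp s t) = false := rfl
@[simp] theorem sumQ_qInl (s : ResTerm) : sumQ (qInl s) = true := rfl
@[simp] theorem sumQ_qInr (s : ResTerm) : sumQ (qInr s) = true := rfl

@[simp] theorem headOkQ_qVar (x : ℕ) : headOkQ (qVar x) = true := rfl
@[simp] theorem headOkQ_qLam (s : ResTerm) : headOkQ (qLam s) = false := rfl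
@[simp] theorem headOkQ_qApp (s : ResTerm) (t : Multiset ResTerm) :
    headOkQ (qApp s t) = true := rfl
@[simp] theorem headOkQ_qInl (s : ResTerm) : headOkQ (qInl s) = false := rfl
@[simp] theorem headOkQ_qInr (s : ResTerm) : headOkQ (qInr s) = false := rfl

@[simp] theorem normalQ_qVar (x : ℕ) : normalQ (qVar x) = true := by
  show normalRt (.var x) = true
  simp [normalRt]

@[simp] theorem normalQ_qLam (s : ResTerm) :
    normalQ (qLam s) = (!sumQ s && normalQ s) := by
  show normalRt (.lam (rout s)) = _
  rw [normalRt, sumQ_rout, normalQ_rout]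

@[simp] theorem normalQ_qInl (s : ResTerm) : normalQ (qInl s) = normalQ s := by
  show normalRt (.inl (rout s)) = _
  rw [normalRt, normalQ_rout]

@[simp] theorem normalQ_qInr (s : ResTerm) : normalQ (qInr s) = normalQ s := by
  show normalRt (.inr (rout s)) = _
  rw [normalRt, normalQ_rout]

theorem normalQ_qApp (s : ResTerm) (t : Multiset ResTerm) :
    normalQ (qApp s t) = true ↔
      headOkQ s = true ∧ normalQ s = true ∧ ∀ v ∈ t, normalQ v = true := by
  show normalRt (.app (rout s) (t.toList.map rout)) = true ↔ _
  rw [normalRt_app, headOkQ_rout, normalQ_rout]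
  simp only [Bool.and_eq_true, List.all_eq_true, and_assoc]
  constructor
  · rintro ⟨h1, h2, h3⟩
    refine ⟨h1, h2, fun v hv => ?_⟩
    rw [← normalQ_rout]
    exact h3 _ (List.mem_map_of_mem (Multiset.mem_toList.mpr hv))
  · rintro ⟨h1, h2, h3⟩
    refine ⟨h1, h2, fun a ha => ?_⟩
    obtain ⟨v, hv, rfl⟩ := List.mem_map.mp ha
    rw [normalQ_rout]
    exact h3 v (Multiset.mem_toList.mp hv)

/-- Every element of the Taylor support of a term whose head spine starts with a
variable is "head-ok" (a variable or an application). -/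
theorem headOkQ_of_headVar {P : Lam} (hP : P.headVar = true) :
    ∀ s ∈ Tsup P, headOkQ s = true := by
  cases P with
  | var x => rintro s rfl; simp
  | lam M => simp [Lam.headVar] at hP
  | oplus M N => simp [Lam.headVar] at hP
  | app M N =>
      rintro s ⟨u, _, t, _, rfl⟩
      simp

/-- If a term is HNF-shaped, no element of its Taylor support is a sum. -/
theorem not_sumQ_of_isHNF {M : Lam} (hM : M.isHNF = true) :
    ∀ s ∈ Tsup M, sumQ s = false := by
  cases M with
  | var x => rintro s rfl; simp
  | lam M => rintro s ⟨u, _, rfl⟩; simp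
  | oplus M N => simp [Lam.isHNF] at hM
  | app M N => rintro s ⟨u, _, t, _, rfl⟩; simp

/-- A normal head-ok element of the Taylor support forces the head spine of the
term to start with a variable. -/
theorem headVar_of_normal : ∀ (P : Lam), ∀ s ∈ Tsup P,
    normalQ s = true → headOkQ s = true → P.headVar = true
  | .var _, s, _, _, _ => rfl
  | .lam M, s, hs, _, hok => by
      obtain ⟨u, _, rfl⟩ := hs
      simp at hok
  | .oplus M N, s, hs, _, hok => by
      rcases hs with ⟨u, _, rfl⟩ | ⟨u, _, rfl⟩ <;> simp at hok
  | .app P Q, s, hs, hn, _ => by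
      obtain ⟨u, hu, t, _, rfl⟩ := hs
      obtain ⟨h1, h2, _⟩ := (normalQ_qApp u t).mp hn
      exact headVar_of_normal P u hu h2 h1

/-- A normal non-sum element of the Taylor support forces the term to be a
head normal form. -/
theorem isHNF_of_normal : ∀ (M : Lam), ∀ s ∈ Tsup M,
    normalQ s = true → sumQ s = false → M.isHNF = true
  | .var _, s, _, _, _ => rfl
  | .lam M, s, hs, hn, _ => by
      obtain ⟨u, hu, rfl⟩ := hs
      rw [normalQ_qLam, Bool.and_eq_true, Bool.not_eq_true'] at hn
      exact isHNF_of_normal M u hu hn.2 hn.1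
  | .oplus M N, s, hs, hn, hsum => by
      rcases hs with ⟨u, _, rfl⟩ | ⟨u, _, rfl⟩ <;> simp at hsum
  | .app P Q, s, hs, hn, _ => by
      obtain ⟨u, hu, t, _, rfl⟩ := hs
      obtain ⟨h1, h2, _⟩ := (normalQ_qApp u t).mp hn
      exact headVar_of_normal P u hu h2 h1

/-! ### STATEMENT 5:
For every λ⊕-term `M`, `𝒯(eBT(M)) = {s ∈ 𝒯(M) | s is a normal resource term}`. -/
theorem taysup_eBT_eq_normal_taysup (M : Lam) :
    TsupB (eBT M) = {s ∈ Tsup M | NormalQ s} := by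
  induction M with
  | var x =>
      ext s
      simp only [eBT, TsupB, Tsup, Set.mem_setOf_eq, Set.mem_singleton_iff, NormalQ_iff]
      constructor
      · rintro rfl; exact ⟨rfl, by simp⟩
      · rintro ⟨rfl, _⟩; rfl
  | lam M ih =>
      ext s
      by_cases h : M.isHNF = true
      · simp only [eBT, if_pos h, TsupB, Tsup, Set.mem_image, Set.mem_setOf_eq, ih,
          NormalQ_iff]
        constructor
        · rintro ⟨u, ⟨hu, hn⟩, rfl⟩
          exact ⟨⟨u, hu, rfl⟩, by simp [hn, not_sumQ_of_isHNF h u hu]⟩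
        · rintro ⟨⟨u, hu, rfl⟩, hn⟩
          rw [normalQ_qLam, Bool.and_eq_true] at hn
          exact ⟨u, ⟨hu, hn.2⟩, rfl⟩
      · simp only [eBT, if_neg h, TsupB, Tsup, Set.mem_empty_iff_false, Set.mem_setOf_eq,
          Set.mem_image, false_iff, not_and]
        rintro ⟨u, hu, rfl⟩ hn
        rw [NormalQ_iff, normalQ_qLam, Bool.and_eq_true, Bool.not_eq_true'] at hn
        exact h (isHNF_of_normal M u hu hn.2 hn.1)
  | app P Q ihP ihQ =>
      ext s
      by_cases h : P.headVar = true
      · simp only [eBT, if_pos h, TsupB, Tsup, Set.mem_setOf_eq, ihP, ihQ, NormalQ_iff]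
        constructor
        · rintro ⟨u, ⟨hu, hnu⟩, t, ht, rfl⟩
          refine ⟨⟨u, hu, t, fun v hv => (ht v hv).1, rfl⟩, ?_⟩
          exact (normalQ_qApp u t).mpr
            ⟨headOkQ_of_headVar h u hu, hnu, fun v hv => (ht v hv).2⟩
        · rintro ⟨⟨u, hu, t, ht, rfl⟩, hn⟩
          obtain ⟨hok, hnu, hnv⟩ := (normalQ_qApp u t).mp hn
          exact ⟨u, ⟨hu, hnu⟩, t, fun v hv => ⟨ht v hv, hnv v hv⟩, rfl⟩
      · simp only [eBT, if_neg h, TsupB, Tsup, Set.mem_empty_iff_false, Set.mem_setOf_eq,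
          false_iff, not_and]
        rintro ⟨u, hu, t, ht, rfl⟩ hn
        rw [NormalQ_iff] at hn
        obtain ⟨hok, hnu, _⟩ := (normalQ_qApp u t).mp hn
        exact h (headVar_of_normal P u hu hnu hok)
  | oplus P Q ihP ihQ =>
      ext s
      simp only [eBT, TsupB, Tsup, Set.mem_union, Set.mem_image, Set.mem_setOf_eq,
        ihP, ihQ, NormalQ_iff]
      constructor
      · rintro (⟨u, ⟨hu, hn⟩, rfl⟩ | ⟨u, ⟨hu, hn⟩, rfl⟩)
        · exact ⟨Or.inl ⟨u, hu, rfl⟩, by simp [hn]⟩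
        · exact ⟨Or.inr ⟨u, hu, rfl⟩, by simp [hn]⟩
      · rintro ⟨⟨u, hu, rfl⟩ | ⟨u, hu, rfl⟩, hn⟩
        · exact Or.inl ⟨u, ⟨hu, by simpa using hn⟩, rfl⟩
        · exact Or.inr ⟨u, ⟨hu, by simpa using hn⟩, rfl⟩
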